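/- The volume function V(r) = mu(B(S,r)) of a compact set S in R^d is of Kneser type: for all 0 <= a <= b and lambda >= 1, V(lambda b) - V(lambda a) <= lambda^d (V(b) - V(a)). -/

import Mathlib

open MeasureTheory Metric Set
open scoped NNReal ENNReal

lemma hausdorff_eq_smul_volume (d : ℕ) : ∃ c : ℝ≥0, c ≠ 0 ∧
    (μH[(d:ℝ)] : Measure (EuclideanSpace ℝ (Fin d)))
      = c • (volume : Measure (EuclideanSpace ℝ (Fin d))) := by
  let L : EuclideanSpace ℝ (Fin d) ≃L[ℝ] (Fin d → ℝ) := EuclideanSpace.equiv (Fin d) ℝ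
  have hpi : (μH[(d:ℝ)] : Measure (Fin d → ℝ)) = volume := by
    have := hausdorffMeasure_pi_real (ι := Fin d)
    simpa using this
  haveI hfin : IsFiniteMeasureOnCompacts (μH[(d:ℝ)] : Measure (EuclideanSpace ℝ (Fin d))) := by
    constructor
    intro K hK
    have hKe : K = L.symm '' (L '' K) := by
      simp [Set.image_image]
    have hlip := (L.symm.toContinuousLinearMap).lipschitz
    have h1 : μH[(d:ℝ)] (L.symm '' (L '' K)) ≤
        (‖L.symm.toContinuousLinearMap‖₊ : ℝ≥0∞) ^ (d:ℝ) * μH[(d:ℝ)] (L '' K) :=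
      hlip.hausdorffMeasure_image_le (by positivity) _
    rw [← hKe] at h1
    refine h1.trans_lt ?_
    rw [hpi]
    exact ENNReal.mul_lt_top (ENNReal.rpow_lt_top_of_nonneg (by positivity) ENNReal.coe_ne_top)
      (hK.image L.continuous).measure_lt_top
  haveI hpos : (μH[(d:ℝ)] : Measure (EuclideanSpace ℝ (Fin d))).IsOpenPosMeasure := by
    constructor
    intro U hU hne h0
    have hlip := (L.toContinuousLinearMap).lipschitz
    have h1 : μH[(d:ℝ)] (L '' U) ≤
        (‖L.toContinuousLinearMap‖₊ : ℝ≥0∞) ^ (d:ℝ) * μH[(d:ℝ)] U :=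
      hlip.hausdorffMeasure_image_le (by positivity) _
    rw [h0, mul_zero] at h1
    have h2 : volume (L '' U) = 0 := by rw [← hpi]; exact le_antisymm h1 zero_le
    exact ((L.toHomeomorph.isOpenMap U hU).measure_pos volume (hne.image _)).ne' h2
  haveI : (μH[(d:ℝ)] : Measure (EuclideanSpace ℝ (Fin d))).IsAddHaarMeasure :=
    { toIsFiniteMeasureOnCompacts := hfin
      toIsAddLeftInvariant := inferInstance
      toIsOpenPosMeasure := hpos }
  refine ⟨Measure.addHaarScalarFactor (μH[(d:ℝ)] : Measure (EuclideanSpace ℝ (Fin d))) volume,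
    (Measure.addHaarScalarFactor_pos_of_isAddHaarMeasure _ _).ne', ?_⟩
  exact Measure.isAddLeftInvariant_eq_smul _ _

section Geom

variable {E : Type*} [NormedAddCommGroup E] [InnerProductSpace ℝ E]

lemma nearest_monotone {S : Set E} {p : E → E} (hp : ∀ x, p x ∈ S)
    (hd : ∀ x, dist x (p x) = infDist x S) (x y : E) :
    0 ≤ (inner ℝ (x - y) (p x - p y) : ℝ) := by
  have h1 : dist x (p x) ≤ dist x (p y) := (hd x) ▸ infDist_le_dist_of_mem (hp y)
  have h2 : dist y (p y) ≤ dist y (p x) := (hd y) ▸ infDist_le_dist_of_mem (hp x)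
  rw [dist_eq_norm, dist_eq_norm] at h1 h2
  have e1 : ‖x - p x‖ ^ 2 ≤ ‖x - p y‖ ^ 2 :=
    pow_le_pow_left₀ (norm_nonneg _) h1 2
  have e2 : ‖y - p y‖ ^ 2 ≤ ‖y - p x‖ ^ 2 :=
    pow_le_pow_left₀ (norm_nonneg _) h2 2
  rw [norm_sub_sq_real, norm_sub_sq_real] at e1 e2
  simp only [inner_sub_left, inner_sub_right] at *
  linarith

lemma anti_key {S : Set E} {p : E → E} (hp : ∀ x, p x ∈ S)
    (hd : ∀ x, dist x (p x) = infDist x S) {lam : ℝ} (hlam : 1 ≤ lam) (x y : E) :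
    dist x y ≤ lam * dist (p x + lam⁻¹ • (x - p x)) (p y + lam⁻¹ • (y - p y)) := by
  have hl0 : 0 < lam := lt_of_lt_of_le one_pos hlam
  have ht0 : 0 < lam⁻¹ := inv_pos.2 hl0
  have ht1 : lam⁻¹ ≤ 1 := inv_le_one_of_one_le₀ hlam
  set t := lam⁻¹ with htdef
  have hw : (p x + t • (x - p x)) - (p y + t • (y - p y))
      = t • (x - y) + (1 - t) • (p x - p y) := by
    simp only [smul_sub, sub_smul, one_smul]
    abel
  have hinner := nearest_monotone hp hd x y
  set u := x - y
  set v := p x - p y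
  have expand : ‖t • u + (1 - t) • v‖ ^ 2
      = t ^ 2 * ‖u‖ ^ 2 + 2 * (t * (1 - t)) * (inner ℝ u v : ℝ) + (1 - t) ^ 2 * ‖v‖ ^ 2 := by
    rw [norm_add_sq_real]
    rw [real_inner_smul_left, real_inner_smul_right, norm_smul, norm_smul]
    rw [Real.norm_eq_abs, Real.norm_eq_abs, abs_of_nonneg ht0.le,
      abs_of_nonneg (by linarith : (0:ℝ) ≤ 1 - t)]
    ring
  have key : (t * ‖u‖) ^ 2 ≤ ‖t • u + (1 - t) • v‖ ^ 2 := by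
    rw [expand]
    nlinarith [sq_nonneg ((1 - t) * ‖v‖),
      mul_nonneg (mul_nonneg ht0.le (by linarith : (0:ℝ) ≤ 1 - t)) hinner, sq_nonneg ‖v‖]
  have key2 : t * ‖u‖ ≤ ‖t • u + (1 - t) • v‖ :=
    le_of_pow_le_pow_left₀ two_ne_zero (norm_nonneg _) key
  rw [dist_eq_norm, dist_eq_norm, hw]
  calc ‖u‖ = lam * (t * ‖u‖) := by rw [htdef, ← mul_assoc, mul_inv_cancel₀ hl0.ne', one_mul]
    _ ≤ lam * ‖t • u + (1 - t) • v‖ := mul_le_mul_of_nonneg_left key2 hl0.le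

lemma mem_cthick_iff {S : Set E} (hne : S.Nonempty) {δ : ℝ} (hδ : 0 ≤ δ) {x : E} :
    x ∈ cthickening δ S ↔ infDist x S ≤ δ := by
  rw [mem_cthickening_iff]
  exact ENNReal.le_ofReal_iff_toReal_le (infEdist_ne_top hne) hδ

lemma le_infDist' {S : Set E} (hne : S.Nonempty) {r : ℝ} {x : E}
    (h : ∀ s ∈ S, r ≤ dist x s) : r ≤ infDist x S := by
  by_contra hcon
  push_neg at hcon
  obtain ⟨y, hy, hylt⟩ := (infDist_lt_iff hne).1 hcon
  exact hylt.not_ge (h y hy)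

end Geom

/-- The parallel volume function V(r) = μ(B(S,r)) of a nonempty compact S ⊆ ℝᵈ
is of Kneser type: for 0 ≤ a ≤ b and λ ≥ 1,
V(λb) - V(λa) ≤ λᵈ (V(b) - V(a)). -/
theorem stmt_1 {d : ℕ} (S : Set (EuclideanSpace ℝ (Fin d)))
    (hS : IsCompact S) (hSne : S.Nonempty) :
    ∀ a b lam : ℝ, 0 ≤ a → a ≤ b → 1 ≤ lam →
      (volume (cthickening (lam * b) S)).toReal
          - (volume (cthickening (lam * a) S)).toReal
        ≤ lam ^ d *
          ((volume (cthickening b S)).toReal - (volume (cthickening a S)).toReal) := by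
  intro a b lam ha hab hlam
  have hl0 : 0 < lam := lt_of_lt_of_le one_pos hlam
  have hb : 0 ≤ b := ha.trans hab
  have hlb : 0 ≤ lam * b := by positivity
  have hla : 0 ≤ lam * a := by positivity
  -- nearest point projection
  have hex : ∀ x, ∃ y ∈ S, infDist x S = dist x y := fun x =>
    hS.exists_infDist_eq_dist hSne x
  choose p hpS hpd using hex
  have hpd' : ∀ x, dist x (p x) = infDist x S := fun x => (hpd x).symm
  set f : EuclideanSpace ℝ (Fin d) → EuclideanSpace ℝ (Fin d) :=
    fun x => p x + lam⁻¹ • (x - p x) with hf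
  have hanti : AntilipschitzWith lam.toNNReal f := by
    apply AntilipschitzWith.of_le_mul_dist
    intro x y
    rw [Real.coe_toNNReal lam hl0.le]
    exact anti_key hpS hpd' hlam x y
  set A1 := cthickening (lam * b) S \ cthickening (lam * a) S with hA1def
  set A2 := cthickening b S \ cthickening a S with hA2def
  -- the map sends the large annulus into the small one
  have hmaps : ∀ x ∈ A1, f x ∈ A2 := by
    rintro x ⟨hxb, hxa⟩
    have hD : infDist x S ≤ lam * b := (mem_cthick_iff hSne hlb).1 hxb
    have hDa : lam * a < infDist x S := by
      by_contra hcon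
      push_neg at hcon
      exact hxa ((mem_cthick_iff hSne hla).2 hcon)
    have hDpos : 0 ≤ infDist x S := infDist_nonneg
    have hdfp : dist (f x) (p x) = lam⁻¹ * infDist x S := by
      rw [hf]
      simp only [dist_eq_norm, add_sub_cancel_left, norm_smul, Real.norm_eq_abs,
        abs_of_nonneg (inv_pos.2 hl0).le]
      rw [← dist_eq_norm, hpd' x]
    have hdxf : dist x (f x) = (1 - lam⁻¹) * infDist x S := by
      have hxf : x - f x = (1 - lam⁻¹) • (x - p x) := by
        rw [hf]
        simp only [sub_smul, one_smul, smul_sub]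
        abel
      rw [dist_eq_norm, hxf, norm_smul, Real.norm_eq_abs,
        abs_of_nonneg (by simpa using inv_le_one_of_one_le₀ hlam : (0:ℝ) ≤ 1 - lam⁻¹),
        ← dist_eq_norm, hpd' x]
    constructor
    · apply (mem_cthick_iff hSne hb).2
      calc infDist (f x) S ≤ dist (f x) (p x) := infDist_le_dist_of_mem (hpS x)
        _ = lam⁻¹ * infDist x S := hdfp
        _ ≤ lam⁻¹ * (lam * b) := by
            exact mul_le_mul_of_nonneg_left hD (inv_pos.2 hl0).le
        _ = b := by field_simp
    · intro hmem
      have hle : infDist (f x) S ≤ a := (mem_cthick_iff hSne ha).1 hmem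
      have hlow : lam⁻¹ * infDist x S ≤ infDist (f x) S := by
        apply le_infDist' hSne
        intro s hs
        have h1 : infDist x S ≤ dist x s := infDist_le_dist_of_mem hs
        have h2 : dist x s ≤ dist x (f x) + dist (f x) s := dist_triangle _ _ _
        have h3 : lam⁻¹ * infDist x S = infDist x S - (1 - lam⁻¹) * infDist x S := by ring
        rw [h3]
        rw [hdxf] at h2
        linarith
      have hgt : a < lam⁻¹ * infDist x S := by
        have := mul_lt_mul_of_pos_left hDa (inv_pos.2 hl0)
        have heq : lam⁻¹ * (lam * a) = a := by field_simp
        linarith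
      linarith
  -- measure comparison via Hausdorff measure
  obtain ⟨c, hc0, hc⟩ := hausdorff_eq_smul_volume d
  have himg : f '' A1 ⊆ A2 := by
    rintro _ ⟨x, hx, rfl⟩
    exact hmaps x hx
  have hH1 : μH[(d:ℝ)] A1 ≤ (lam.toNNReal : ℝ≥0∞) ^ (d:ℝ) * μH[(d:ℝ)] (f '' A1) :=
    hanti.le_hausdorffMeasure_image (by positivity) A1
  have hH2 : μH[(d:ℝ)] (f '' A1) ≤ μH[(d:ℝ)] A2 := measure_mono himg
  have key : volume A1 ≤ (lam.toNNReal : ℝ≥0∞) ^ (d:ℝ) * volume A2 := by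
    have h1 := hH1.trans (mul_le_mul_right hH2 _)
    rw [hc] at h1
    simp only [Measure.smul_apply, smul_eq_mul] at h1
    have h2 : (c : ℝ≥0∞) * volume A1 ≤
        (c : ℝ≥0∞) * ((lam.toNNReal : ℝ≥0∞) ^ (d:ℝ) * volume A2) := by
      calc (c : ℝ≥0∞) * volume A1 ≤ (lam.toNNReal : ℝ≥0∞) ^ (d:ℝ) * ((c:ℝ≥0∞) * volume A2) := h1
        _ = (c : ℝ≥0∞) * ((lam.toNNReal : ℝ≥0∞) ^ (d:ℝ) * volume A2) := by ring
    exact (ENNReal.mul_le_mul_iff_right (by exact_mod_cast hc0) ENNReal.coe_ne_top).1 h2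
  -- finiteness and monotonicity facts
  have hcomp : ∀ r : ℝ, volume (cthickening r S) ≠ ⊤ := fun r =>
    (hS.cthickening).measure_lt_top.ne
  have hsub1 : cthickening (lam * a) S ⊆ cthickening (lam * b) S :=
    cthickening_mono (by nlinarith) S
  have hsub2 : cthickening a S ⊆ cthickening b S := cthickening_mono hab S
  have hmeas : ∀ r : ℝ, NullMeasurableSet (cthickening r S) volume := fun r =>
    (isClosed_cthickening).measurableSet.nullMeasurableSet
  have hA1 : volume A1 = volume (cthickening (lam * b) S) - volume (cthickening (lam * a) S) :=
    measure_diff hsub1 (hmeas _) (hcomp _)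
  have hA2 : volume A2 = volume (cthickening b S) - volume (cthickening a S) :=
    measure_diff hsub2 (hmeas _) (hcomp _)
  have hA1r : (volume A1).toReal
      = (volume (cthickening (lam * b) S)).toReal - (volume (cthickening (lam * a) S)).toReal := by
    rw [hA1, ENNReal.toReal_sub_of_le (measure_mono hsub1) (hcomp _)]
  have hA2r : (volume A2).toReal
      = (volume (cthickening b S)).toReal - (volume (cthickening a S)).toReal := by
    rw [hA2, ENNReal.toReal_sub_of_le (measure_mono hsub2) (hcomp _)]
  rw [← hA1r, ← hA2r]
  have hRHSne : (lam.toNNReal : ℝ≥0∞) ^ (d:ℝ) * volume A2 ≠ ⊤ := by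
    apply ENNReal.mul_ne_top
    · exact (ENNReal.rpow_lt_top_of_nonneg (by positivity) ENNReal.coe_ne_top).ne
    · exact ((measure_mono (diff_subset)).trans_lt (hS.cthickening).measure_lt_top).ne
  have := ENNReal.toReal_mono hRHSne key
  rw [ENNReal.toReal_mul] at this
  have hpow : ((lam.toNNReal : ℝ≥0∞) ^ (d:ℝ)).toReal = lam ^ d := by
    rw [ENNReal.rpow_natCast, ENNReal.toReal_pow, ENNReal.coe_toReal,
      Real.coe_toNNReal lam hl0.le]
  rw [hpow] at this
  exact this
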